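/- In the second traditional strategy (splitting by a point into 2^N sub-boxes with f evaluated at the splitting point), every partition of a box that already has f evaluated at exactly one of its vertices produces exactly one sub-box having f evaluated at two of its vertices, and every partition of a box having f evaluated at two (opposite) vertices produces exactly two sub-boxes each having f evaluated at two of its vertices. -/

import Mathlib

/-- In the second traditional strategy, a box `[p,q]` with evaluation set
`E ⊆ vertices of [p,q]` is split by an interior point `c` into `2^N` sub-boxes
and `E` is augmented by `c`.  If exactly one vertex of `[p,q]` is in `E`, then
exactly one sub-box has `f` evaluated at two of its vertices; if `E` consists of
two opposite vertices of `[p,q]`, then exactly two sub-boxes have `f` evaluated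
at two of their vertices. -/
theorem second_strategy_redundancy (N : ℕ) (hN : 1 ≤ N)
    (p q c : Fin N → ℝ) (hpc : ∀ j, p j < c j) (hcq : ∀ j, c j < q j)
    (E : Set (Fin N → ℝ))
    (hE : E ⊆ {w | ∀ j, w j = p j ∨ w j = q j})
    (lo hi : (Fin N → Bool) → Fin N → ℝ)
    (hlo : ∀ s j, lo s j = if s j then c j else p j)
    (hhi : ∀ s j, hi s j = if s j then q j else c j) :
    (({w | ∀ j, w j = p j ∨ w j = q j} ∩ E).ncard = 1 →
      {s : Fin N → Bool |
        ({w | ∀ j, w j = lo s j ∨ w j = hi s j} ∩ (E ∪ {c})).ncard = 2}.ncard = 1) ∧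
    (∀ w w' : Fin N → ℝ,
      (∀ j, (w j = p j ∧ w' j = q j) ∨ (w j = q j ∧ w' j = p j)) →
      {w | ∀ j, w j = p j ∨ w j = q j} ∩ E = {w, w'} →
      {s : Fin N → Bool |
        ({x | ∀ j, x j = lo s j ∨ x j = hi s j} ∩ (E ∪ {c})).ncard = 2}.ncard = 2) := by
  have hpq : ∀ j, p j < q j := fun j => (hpc j).trans (hcq j)
  set V : Set (Fin N → ℝ) := {w | ∀ j, w j = p j ∨ w j = q j} with hVdef
  have hVfin : V.Finite := by
    have hsub : V ⊆ Set.pi Set.univ (fun j => {p j, q j}) := by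
      intro w hw j _
      rcases hw j with h | h <;> simp [h]
    exact (Set.Finite.pi (fun j => ((Set.finite_singleton (q j)).insert (p j)))).subset hsub
  have hEfin : E.Finite := hVfin.subset hE
  set j0 : Fin N := ⟨0, hN⟩ with hj0
  have hcV : c ∉ V := by
    intro h
    rcases h j0 with h | h
    · exact (hpc j0).ne' h
    · exact (hcq j0).ne h
  have hcE : c ∉ E := fun h => hcV (hE h)
  set sOf : (Fin N → ℝ) → (Fin N → Bool) := fun w j => decide (w j = q j) with hsOfdef
  -- c is a vertex of every sub-box
  have hcmem : ∀ s : Fin N → Bool, ∀ j, c j = lo s j ∨ c j = hi s j := by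
    intro s j
    cases hsj : s j
    · right; simp [hhi, hsj]
    · left; simp [hlo, hsj]
  -- a big-box vertex w is a vertex of sub-box s iff s = sOf w
  have hkey : ∀ w, w ∈ V →
      ∀ s : Fin N → Bool, ((∀ j, w j = lo s j ∨ w j = hi s j) ↔ s = sOf w) := by
    intro w hw s
    constructor
    · intro h
      funext j
      rcases hw j with hwj | hwj
      · have hsj : s j = false := by
          cases hsj : s j
          · rfl
          · exfalso
            rcases h j with h' | h'
            · rw [hlo, hsj, if_pos rfl, hwj] at h'
              exact (hpc j).ne' h'.symm
            · rw [hhi, hsj, if_pos rfl, hwj] at h'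
              exact (hpq j).ne h'
        rw [hsj]
        simp [hsOfdef, hwj, (hpq j).ne]
      · have hsj : s j = true := by
          cases hsj : s j
          · exfalso
            rcases h j with h' | h'
            · rw [hlo, hsj, if_neg (by simp), hwj] at h'
              exact (hpq j).ne h'.symm
            · rw [hhi, hsj, if_neg (by simp), hwj] at h'
              exact (hcq j).ne h'.symm
          · rfl
        rw [hsj]
        simp [hsOfdef, hwj]
    · rintro rfl j
      rcases hw j with hwj | hwj
      · left
        rw [hlo]
        simp [hsOfdef, hwj, (hpq j).ne]
      · right
        rw [hhi]
        simp [hsOfdef, hwj]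
  -- rewrite the counting condition
  have hsplit : ∀ s : Fin N → Bool,
      {x | ∀ j, x j = lo s j ∨ x j = hi s j} ∩ (E ∪ {c}) =
        insert c ({x | ∀ j, x j = lo s j ∨ x j = hi s j} ∩ E) := by
    intro s
    ext x
    simp only [Set.mem_inter_iff, Set.mem_union, Set.mem_singleton_iff, Set.mem_insert_iff,
      Set.mem_setOf_eq]
    constructor
    · rintro ⟨h1, h2 | h2⟩
      · exact Or.inr ⟨h1, h2⟩
      · exact Or.inl h2
    · rintro (rfl | ⟨h1, h2⟩)
      · exact ⟨hcmem s, Or.inr rfl⟩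
      · exact ⟨h1, Or.inl h2⟩
  have hcount : ∀ s : Fin N → Bool,
      ({x | ∀ j, x j = lo s j ∨ x j = hi s j} ∩ (E ∪ {c})).ncard = 2 ↔
        ({x | ∀ j, x j = lo s j ∨ x j = hi s j} ∩ E).ncard = 1 := by
    intro s
    rw [hsplit s]
    have h2 : c ∉ {x | ∀ j, x j = lo s j ∨ x j = hi s j} ∩ E := fun h => hcE h.2
    have h3 : (insert c ({x | ∀ j, x j = lo s j ∨ x j = hi s j} ∩ E)).ncard =
        ({x | ∀ j, x j = lo s j ∨ x j = hi s j} ∩ E).ncard + 1 :=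
      Set.ncard_insert_of_notMem h2 (hEfin.subset (fun x hx => hx.2))
    rw [h3]
    exact Nat.succ_inj
  constructor
  · -- one evaluated vertex
    intro h1
    rw [Set.inter_eq_self_of_subset_right hE] at h1
    obtain ⟨w, hw⟩ := Set.ncard_eq_one.mp h1
    have hwV : w ∈ V := hE (by rw [hw]; exact rfl)
    have : {s : Fin N → Bool |
        ({x | ∀ j, x j = lo s j ∨ x j = hi s j} ∩ (E ∪ {c})).ncard = 2} = {sOf w} := by
      ext s
      rw [Set.mem_setOf_eq, hcount s, hw]
      constructor
      · intro hn
        obtain ⟨x, hx⟩ := Set.ncard_eq_one.mp hn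
        have hxmem : x ∈ {x | ∀ j, x j = lo s j ∨ x j = hi s j} ∩ {w} := hx ▸ rfl
        obtain ⟨hx1, hx2⟩ := hxmem
        rw [Set.mem_singleton_iff] at hx2
        subst hx2
        exact (hkey x hwV s).mp hx1
      · intro hs
        rw [Set.mem_singleton_iff] at hs
        have : {x | ∀ j, x j = lo s j ∨ x j = hi s j} ∩ {w} = {w} := by
          apply Set.inter_eq_self_of_subset_right
          intro x hx
          rw [Set.mem_singleton_iff] at hx
          subst hx
          exact (hkey x hwV s).mpr hs
        rw [this]
        exact Set.ncard_singleton w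
    rw [this]
    exact Set.ncard_singleton _
  · -- two opposite evaluated vertices
    intro w w' hww' hEeq
    rw [Set.inter_eq_self_of_subset_right hE] at hEeq
    have hwV : w ∈ V := by
      intro j
      rcases hww' j with ⟨h, _⟩ | ⟨h, _⟩
      · exact Or.inl h
      · exact Or.inr h
    have hw'V : w' ∈ V := by
      intro j
      rcases hww' j with ⟨_, h⟩ | ⟨_, h⟩
      · exact Or.inr h
      · exact Or.inl h
    have hsne : sOf w ≠ sOf w' := by
      intro h
      have h0 := congrFun h j0
      rcases hww' j0 with ⟨h1, h2⟩ | ⟨h1, h2⟩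
      · simp [hsOfdef, h1, h2, (hpq j0).ne] at h0
      · simp [hsOfdef, h1, h2, (hpq j0).ne] at h0
    have : {s : Fin N → Bool |
        ({x | ∀ j, x j = lo s j ∨ x j = hi s j} ∩ (E ∪ {c})).ncard = 2} =
        {sOf w, sOf w'} := by
      ext s
      rw [Set.mem_setOf_eq, hcount s, hEeq]
      constructor
      · intro hn
        obtain ⟨x, hx⟩ := Set.ncard_eq_one.mp hn
        have hxmem : x ∈ {x | ∀ j, x j = lo s j ∨ x j = hi s j} ∩ ({w, w'} : Set _) :=
          hx ▸ rfl
        obtain ⟨hx1, hx2⟩ := hxmem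
        rcases hx2 with rfl | rfl
        · exact Or.inl ((hkey x hwV s).mp hx1)
        · exact Or.inr ((hkey x hw'V s).mp hx1)
      · intro hs
        rcases hs with rfl | rfl
        · have : {x | ∀ j, x j = lo (sOf w) j ∨ x j = hi (sOf w) j} ∩ ({w, w'} : Set _)
              = {w} := by
            ext x
            simp only [Set.mem_inter_iff, Set.mem_insert_iff, Set.mem_singleton_iff,
              Set.mem_setOf_eq]
            constructor
            · rintro ⟨h1, rfl | rfl⟩
              · rfl
              · exact absurd ((hkey x hw'V _).mp h1) hsne
            · rintro rfl
              exact ⟨(hkey x hwV _).mpr rfl, Or.inl rfl⟩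
          rw [this]
          exact Set.ncard_singleton w
        · have : {x | ∀ j, x j = lo (sOf w') j ∨ x j = hi (sOf w') j} ∩ ({w, w'} : Set _)
              = {w'} := by
            ext x
            simp only [Set.mem_inter_iff, Set.mem_insert_iff, Set.mem_singleton_iff,
              Set.mem_setOf_eq]
            constructor
            · rintro ⟨h1, rfl | rfl⟩
              · exact absurd ((hkey x hwV _).mp h1) (Ne.symm hsne)
              · rfl
            · rintro rfl
              exact ⟨(hkey x hw'V _).mpr rfl, Or.inr rfl⟩
          rw [this]
          exact Set.ncard_singleton w'
    rw [this]
    exact Set.ncard_pair hsne
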